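/- Fix q ≥ 1, θ > 0 and p ∈ Δ^{q−1}. For every n ≥ 2 and every B ∈ 𝒜_{n−1}, ∑_{A ∈ 𝒜_n} S_{n,n−1}(A,B) · Esf_{θ,p}^n(A) = Esf_{θ,p}^{n−1}(B), where S_{n,n−1}(A,B) = ∑_{(𝐚,j) : 𝐚 ∈ supp A, a_j ≥ 1, A_{∖𝐚,j} = B} a_j A(𝐚)/n is the kernel removing one uniformly random colored element from A. Consequently the family (Esf_{θ,p}^n)_{n ≥ 1} is consistent with respect to the system of kernels generated by these one-step kernels under composition. -/

import Mathlib

open Finset Nat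
open scoped Classical

/-- `col(A) = ∑_𝐚 A(𝐚) • 𝐚`, the color count vector of a colored partition. -/
def colA {q : ℕ} (A : (Fin q → ℕ) →₀ ℕ) : Fin q → ℕ :=
  fun j => ∑ a ∈ A.support, A a * a j

/-- `‖A‖ = ∑_𝐚 A(𝐚)`, the number of parts of a colored partition. -/
def asize {q : ℕ} (A : (Fin q → ℕ) →₀ ℕ) : ℕ := ∑ a ∈ A.support, A a

/-- The multinomial coefficient `M_𝐧(A)` of a colored partition `A ⊨ 𝐧`. -/
noncomputable def Mcoef {q : ℕ} (n : Fin q → ℕ) (A : (Fin q → ℕ) →₀ ℕ) : ℝ :=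
  (∏ j, (n j)! : ℝ) *
    ∏ a ∈ A.support,
      ((Nat.multinomial Finset.univ a : ℝ) ^ A a / ((∑ j, a j : ℝ) ^ A a * (A a)!))

/-- The polychromatic Ewens sampling formula
`Esf_{θ,p}^n(A) = (n!/(θ)_n) θ^{‖A‖} (p^{col A}/(col A)!) M_{col A}(A)`. -/
noncomputable def esf {q : ℕ} (θ : ℝ) (p : Fin q → ℝ) (n : ℕ)
    (A : (Fin q → ℕ) →₀ ℕ) : ℝ :=
  (n ! : ℝ) / (ascPochhammer ℝ n).eval θ * θ ^ asize A *
    ((∏ j, p j ^ colA A j) / ∏ j, ((colA A j)! : ℝ)) * Mcoef (colA A) A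

/-- The `j`-th standard basis vector of `ℕ^q`. -/
def eVec {q : ℕ} (j : Fin q) : Fin q → ℕ := fun i => if i = j then 1 else 0

/-- `A_{∖𝐚,j}`: the colored partition obtained from `A` by removing one element of color
`j` from a part with color count `𝐚`: it is `A - 1_𝐚` if `𝐚 = e_j`, and
`A - 1_𝐚 + 1_{𝐚-e_j}` otherwise. -/
noncomputable def removeOne {q : ℕ} (A : (Fin q → ℕ) →₀ ℕ) (a : Fin q → ℕ) (j : Fin q) :
    (Fin q → ℕ) →₀ ℕ :=
  if a = eVec j then A - Finsupp.single a 1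
  else A - Finsupp.single a 1 + Finsupp.single (fun i => a i - eVec j i) 1

/-- The one-step consistency kernel
`S_{n,n-1}(A,B) = ∑_{(𝐚,j) : 𝐚 ∈ supp A, a_j ≥ 1, A_{∖𝐚,j} = B} a_j A(𝐚)/n`,
removing one uniformly random colored element from `A`. -/
noncomputable def oneStepKernel {q : ℕ} (n : ℕ) (A B : (Fin q → ℕ) →₀ ℕ) : ℝ :=
  ∑ a ∈ A.support, ∑ j : Fin q,
    if 1 ≤ a j ∧ removeOne A a j = B then (a j * A a : ℝ) / n else 0

/-- The `k`-fold composition `S_{n,n-k}` of the one-step kernels, going from size `n`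
down to size `n - k`. -/
noncomputable def iterKernel {q : ℕ} :
    ℕ → ℕ → ((Fin q → ℕ) →₀ ℕ) → ((Fin q → ℕ) →₀ ℕ) → ℝ
  | 0, _, A, B => if A = B then 1 else 0
  | k + 1, n, A, B => ∑ᶠ C, oneStepKernel n A C * iterKernel k (n - 1) C B


section helpers
variable {q : ℕ}

lemma eVec_apply (j i : Fin q) : eVec j i = if i = j then 1 else 0 := rfl

lemma eVec_self (j : Fin q) : eVec j j = 1 := by simp [eVec]

lemma eVec_ne_zero (j : Fin q) : eVec j ≠ 0 := by
  intro h
  have := congrFun h j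
  simp [eVec] at this

lemma sum_eVec (j : Fin q) : ∑ i, eVec j i = 1 := by
  simp [eVec]

lemma colA_eq_sum (A : (Fin q → ℕ) →₀ ℕ) (j : Fin q) :
    colA A j = A.sum fun a c => c * a j := rfl

lemma asize_eq_sum (A : (Fin q → ℕ) →₀ ℕ) : asize A = A.sum fun _ c => c := rfl

lemma colA_add (A B : (Fin q → ℕ) →₀ ℕ) (j : Fin q) :
    colA (A + B) j = colA A j + colA B j := by
  simp only [colA_eq_sum]
  exact Finsupp.sum_add_index' (fun a => by simp) (fun a b₁ b₂ => add_mul _ _ _)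

lemma asize_add (A B : (Fin q → ℕ) →₀ ℕ) :
    asize (A + B) = asize A + asize B := by
  simp only [asize_eq_sum]
  exact Finsupp.sum_add_index' (fun a => rfl) (fun a b₁ b₂ => rfl)

lemma colA_single (c : Fin q → ℕ) (k : ℕ) (j : Fin q) :
    colA (Finsupp.single c k) j = k * c j := by
  simp only [colA_eq_sum]
  exact Finsupp.sum_single_index (by simp)

lemma asize_single (c : Fin q → ℕ) (k : ℕ) :
    asize (Finsupp.single c k) = k := by
  simp only [asize_eq_sum]
  exact Finsupp.sum_single_index rfl



section helpers
variable {q : ℕ}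

noncomputable def gcoef (a : Fin q → ℕ) : ℝ :=
  ((∑ i, a i) - 1)! / ∏ i, ((a i)! : ℝ)

noncomputable def Fterm (a : Fin q → ℕ) (k : ℕ) : ℝ := gcoef a ^ k / k !

noncomputable def prodF (A : (Fin q → ℕ) →₀ ℕ) : ℝ := ∏ a ∈ A.support, Fterm a (A a)

lemma prod_factorial_pos (a : Fin q → ℕ) : (0:ℝ) < ∏ i, ((a i)! : ℝ) := by
  apply Finset.prod_pos; intro i _; exact_mod_cast Nat.factorial_pos _

lemma gcoef_pos (a : Fin q → ℕ) : 0 < gcoef a := by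
  apply _root_.div_pos
  · exact_mod_cast Nat.factorial_pos _
  · exact prod_factorial_pos a

lemma Fterm_zero (a : Fin q → ℕ) : Fterm a 0 = 1 := by simp [Fterm]

lemma Fterm_succ (a : Fin q → ℕ) (k : ℕ) :
    Fterm a (k + 1) = Fterm a k * (gcoef a / (k + 1)) := by
  have h1 : ((k:ℝ)+1) ≠ 0 := by positivity
  have h2 : (k ! : ℝ) ≠ 0 := by exact_mod_cast Nat.factorial_ne_zero k
  rw [Fterm, Fterm, Nat.factorial_succ, pow_succ]
  push_cast
  field_simp

lemma prodF_eq_superset (A : (Fin q → ℕ) →₀ ℕ) {s : Finset (Fin q → ℕ)}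
    (hs : A.support ⊆ s) : prodF A = ∏ a ∈ s, Fterm a (A a) := by
  rw [prodF]
  refine Finset.prod_subset hs ?_
  intro a _ ha
  rw [Finsupp.notMem_support_iff.mp ha, Fterm_zero]

lemma prodF_add_single (A : (Fin q → ℕ) →₀ ℕ) (c : Fin q → ℕ) :
    prodF (A + Finsupp.single c 1) = prodF A * (gcoef c / (A c + 1)) := by
  classical
  set A' : (Fin q → ℕ) →₀ ℕ := A + Finsupp.single c 1 with hA'
  set s0 := A.support.erase c with hs0
  have hc : c ∉ s0 := Finset.notMem_erase _ _
  have hsub : A.support ⊆ insert c s0 := by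
    intro a ha
    by_cases h : a = c
    · simp [h]
    · exact Finset.mem_insert_of_mem (Finset.mem_erase.mpr ⟨h, ha⟩)
  have hsub' : A'.support ⊆ insert c s0 := by
    refine Finsupp.support_add.trans ?_
    apply Finset.union_subset hsub
    refine (Finsupp.support_single_subset).trans ?_
    simp
  rw [prodF_eq_superset A hsub, prodF_eq_superset A' hsub',
    Finset.prod_insert hc, Finset.prod_insert hc]
  have hAc : A' c = A c + 1 := by
    rw [hA', Finsupp.add_apply, Finsupp.single_apply, if_pos rfl]
  have hrest : ∀ a ∈ s0, Fterm a (A' a) = Fterm a (A a) := by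
    intro a ha
    have h : a ≠ c := (Finset.mem_erase.mp ha).1
    rw [hA', Finsupp.add_apply, Finsupp.single_apply, if_neg (Ne.symm h), add_zero]
  rw [Finset.prod_congr rfl hrest, hAc, Fterm_succ]
  ring

lemma gcoef_eVec (j : Fin q) : gcoef (eVec j) = 1 := by
  have h1 : ∑ i, eVec j i = 1 := by simp [eVec]
  have h2 : ∀ i ∈ Finset.univ, ((eVec j i)! : ℝ) = 1 := by
    intro i _
    by_cases h : i = j <;> simp [eVec, h]
  rw [gcoef, h1, Finset.prod_congr rfl h2]
  simp

lemma gcoef_add_eVec (b : Fin q → ℕ) (j : Fin q) (hb : 1 ≤ ∑ i, b i) :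
    gcoef (fun i => b i + eVec j i) = gcoef b * (∑ i, b i) / (b j + 1) := by
  have hsum : ∑ i, (b i + eVec j i) = (∑ i, b i) + 1 := by
    rw [Finset.sum_add_distrib]
    simp [eVec]
  have hnum : ((∑ i, (b i + eVec j i)) - 1)! = (∑ i, b i) * ((∑ i, b i) - 1)! := by
    rw [hsum]
    simp only [Nat.add_sub_cancel]
    exact (Nat.mul_factorial_pred (Nat.one_le_iff_ne_zero.mp hb)).symm
  have hden : ∏ i, (((b i + eVec j i))! : ℝ) = (∏ i, ((b i)! : ℝ)) * (b j + 1) := by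
    have key : ∀ i ∈ Finset.univ, (((b i + eVec j i))! : ℝ)
        = ((b i)! : ℝ) * (if i = j then ((b j : ℝ) + 1) else 1) := by
      intro i _
      by_cases h : i = j
      · subst h
        have h3 : b i + eVec i i = b i + 1 := by simp [eVec]
        rw [h3, if_pos rfl, Nat.factorial_succ]
        push_cast; ring
      · simp [eVec, h]
    rw [Finset.prod_congr rfl key, Finset.prod_mul_distrib,
      Finset.prod_ite_eq' Finset.univ j (fun _ => ((b j : ℝ) + 1))]
    simp
  have hd1 : (0:ℝ) < ∏ i, ((b i)! : ℝ) := prod_factorial_pos b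
  have hd2 : (0:ℝ) < (b j : ℝ) + 1 := by positivity
  rw [gcoef, gcoef, hnum, hden]
  push_cast
  field_simp

lemma pochPos (θ : ℝ) (hθ : 0 < θ) (n : ℕ) : 0 < (ascPochhammer ℝ n).eval θ := by
  induction n with
  | zero => simp [ascPochhammer_zero]
  | succ k ih =>
      rw [ascPochhammer_succ_right]
      simp only [Polynomial.eval_mul, Polynomial.eval_add, Polynomial.eval_X,
        Polynomial.eval_natCast]
      have : (0:ℝ) < θ + k := by positivity
      positivity



lemma exists_pos_of_ne_zero {a : Fin q → ℕ} (ha : a ≠ 0) : 1 ≤ ∑ i, a i := by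
  rcases Function.ne_iff.mp ha with ⟨i, hi⟩
  have h1 : 1 ≤ a i := Nat.one_le_iff_ne_zero.mpr hi
  calc 1 ≤ a i := h1
    _ ≤ ∑ i, a i := Finset.single_le_sum (fun _ _ => Nat.zero_le _) (Finset.mem_univ i)

lemma multinomial_eq_real {a : Fin q → ℕ} (ha : a ≠ 0) :
    (Nat.multinomial Finset.univ a : ℝ) = (∑ i, a i) * gcoef a := by
  have hs : 1 ≤ ∑ i, a i := exists_pos_of_ne_zero ha
  have hspec := Nat.multinomial_spec Finset.univ a
  have hfac : ((∑ i, a i)! : ℝ) = (∏ i, ((a i)! : ℝ)) * (Nat.multinomial Finset.univ a : ℝ) := by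
    exact_mod_cast congrArg (Nat.cast : ℕ → ℝ) hspec.symm
  have hd : (0:ℝ) < ∏ i, ((a i)! : ℝ) := prod_factorial_pos a
  have hfac2 : ((∑ i, a i)! : ℝ) = (∑ i, a i) * ((∑ i, a i) - 1)! := by
    exact_mod_cast (Nat.mul_factorial_pred (Nat.one_le_iff_ne_zero.mp hs)).symm
  have hM : (Nat.multinomial Finset.univ a : ℝ)
      = ((∑ i, a i)! : ℝ) / ∏ i, ((a i)! : ℝ) := by
    rw [eq_div_iff hd.ne']
    norm_cast
    rw [mul_comm]
    exact hspec
  rw [hM, hfac2, gcoef, mul_div_assoc]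

lemma esf_eq (θ : ℝ) (p : Fin q → ℝ) (n : ℕ) (A : (Fin q → ℕ) →₀ ℕ) (hA : A 0 = 0) :
    esf θ p n A = (n ! : ℝ) / (ascPochhammer ℝ n).eval θ * θ ^ asize A *
      (∏ j, p j ^ colA A j) * prodF A := by
  have hfac : ∀ a ∈ A.support,
      ((Nat.multinomial Finset.univ a : ℝ) ^ A a / ((∑ j, a j : ℝ) ^ A a * (A a)!))
        = Fterm a (A a) := by
    intro a ha
    have ha0 : a ≠ 0 := by
      intro h; subst h
      exact (Finsupp.mem_support_iff.mp ha) hA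
    have hs : 1 ≤ ∑ i, a i := exists_pos_of_ne_zero ha0
    have h1 : ∑ j, ((a j : ℝ)) = ((∑ i, a i : ℕ) : ℝ) := by push_cast; rfl
    have h2 : ((∑ i, a i : ℕ) : ℝ) ^ A a ≠ 0 := by
      apply pow_ne_zero
      exact_mod_cast Nat.one_le_iff_ne_zero.mp hs
    rw [Fterm, multinomial_eq_real ha0, mul_pow, h1]
    exact mul_div_mul_left _ _ h2
  have hQ : (∏ j, ((colA A j)! : ℝ)) ≠ 0 := by
    apply _root_.ne_of_gt
    apply Finset.prod_pos
    intro j _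
    exact_mod_cast Nat.factorial_pos _
  have halg : ∀ K P Q R : ℝ, Q ≠ 0 → K * (P / Q) * (Q * R) = K * P * R := by
    intro K P Q R hQ'
    have h := div_mul_cancel₀ P hQ'
    calc K * (P / Q) * (Q * R) = K * ((P / Q * Q) * R) := by ring
      _ = K * P * R := by rw [h]; ring
  rw [esf, Mcoef, Finset.prod_congr rfl hfac, ← prodF]
  exact halg _ _ _ _ hQ

noncomputable def addT (B : (Fin q → ℕ) →₀ ℕ) (b : Fin q → ℕ) (j : Fin q) :
    (Fin q → ℕ) →₀ ℕ :=
  B - Finsupp.single b 1 + Finsupp.single (fun i => b i + eVec j i) 1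

lemma addE_ne_zero (b : Fin q → ℕ) (j : Fin q) : (fun i => b i + eVec j i) ≠ 0 := by
  intro h
  have := congrFun h j
  simp [eVec] at this

lemma addE_ne_self (b : Fin q → ℕ) (j : Fin q) : (fun i => b i + eVec j i) ≠ b := by
  intro h
  have := congrFun h j
  simp [eVec] at this

lemma addE_zero (j : Fin q) : (fun i => (0 : Fin q → ℕ) i + eVec j i) = eVec j := by
  funext i
  simp

lemma addE_eq_eVec_iff (b : Fin q → ℕ) (j : Fin q) :
    (fun i => b i + eVec j i) = eVec j ↔ b = 0 := by
  constructor
  · intro h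
    funext i
    have hi := congrFun h i
    show b i = 0
    by_cases hij : i = j
    · subst hij
      have h2 : b i + 1 = 1 := by simpa [eVec] using hi
      omega
    · simpa [eVec, hij] using hi
  · intro h; subst h; exact addE_zero j

lemma sub_single_zero (B : (Fin q → ℕ) →₀ ℕ) (hB : B 0 = 0) :
    B - Finsupp.single (0 : Fin q → ℕ) 1 = B := by
  ext a
  rw [Finsupp.tsub_apply, Finsupp.single_apply]
  by_cases h : a = 0
  · subst h; simp [hB]
  · simp [Ne.symm h]

lemma single_le_of_mem {B : (Fin q → ℕ) →₀ ℕ} {b : Fin q → ℕ} (hb : b ∈ B.support) :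
    Finsupp.single b 1 ≤ B :=
  Finsupp.single_le_iff.mpr (Nat.one_le_iff_ne_zero.mpr (Finsupp.mem_support_iff.mp hb))

lemma sub_add_single_cancel {B : (Fin q → ℕ) →₀ ℕ} {b : Fin q → ℕ} (hb : b ∈ B.support) :
    B - Finsupp.single b 1 + Finsupp.single b 1 = B :=
  tsub_add_cancel_of_le (single_le_of_mem hb)

lemma addT_zero (B : (Fin q → ℕ) →₀ ℕ) (hB : B 0 = 0) (j : Fin q) :
    addT B 0 j = B + Finsupp.single (eVec j) 1 := by
  rw [addT, sub_single_zero B hB]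
  congr 1
  exact congrArg (fun c => Finsupp.single c 1) (addE_zero j)

lemma colA_addT {B : (Fin q → ℕ) →₀ ℕ} (hB : B 0 = 0) {b : Fin q → ℕ}
    (hb : b = 0 ∨ b ∈ B.support) (j i : Fin q) :
    colA (addT B b j) i = colA B i + eVec j i := by
  rcases hb with hb | hb
  · subst hb
    rw [addT_zero B hB, colA_add, colA_single, one_mul]
  · have hB' : B = (B - Finsupp.single b 1) + Finsupp.single b 1 :=
      (sub_add_single_cancel hb).symm
    have h1 : colA B i = colA (B - Finsupp.single b 1) i + b i := by
      conv_lhs => rw [hB']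
      rw [colA_add, colA_single, one_mul]
    rw [addT, colA_add, colA_single, one_mul]
    omega

lemma asize_addT_zero {B : (Fin q → ℕ) →₀ ℕ} (hB : B 0 = 0) (j : Fin q) :
    asize (addT B 0 j) = asize B + 1 := by
  rw [addT_zero B hB, asize_add, asize_single]

lemma asize_addT_mem {B : (Fin q → ℕ) →₀ ℕ} {b : Fin q → ℕ}
    (hb : b ∈ B.support) (j : Fin q) :
    asize (addT B b j) = asize B := by
  have hB' : B = (B - Finsupp.single b 1) + Finsupp.single b 1 :=
    (sub_add_single_cancel hb).symm
  have h1 : asize B = asize (B - Finsupp.single b 1) + 1 := by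
    conv_lhs => rw [hB']
    rw [asize_add, asize_single]
  rw [addT, asize_add, asize_single]
  omega

lemma sub_single_apply_ne {B : (Fin q → ℕ) →₀ ℕ} {b c : Fin q → ℕ} (h : b ≠ c) :
    ((B - Finsupp.single b 1) : (Fin q → ℕ) →₀ ℕ) c = B c := by
  rw [Finsupp.tsub_apply, Finsupp.single_apply, if_neg h, Nat.sub_zero]

lemma addT_apply_addE (B : (Fin q → ℕ) →₀ ℕ) (b : Fin q → ℕ) (j : Fin q) :
    (addT B b j) (fun i => b i + eVec j i) = B (fun i => b i + eVec j i) + 1 := by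
  rw [addT, Finsupp.add_apply, Finsupp.single_apply, if_pos rfl,
    sub_single_apply_ne (Ne.symm (addE_ne_self b j))]

lemma addT_apply_zero {B : (Fin q → ℕ) →₀ ℕ} (hB : B 0 = 0) (b : Fin q → ℕ) (j : Fin q) :
    (addT B b j) 0 = 0 := by
  rw [addT, Finsupp.add_apply, Finsupp.single_apply, if_neg (addE_ne_zero b j),
    Finsupp.tsub_apply, hB]
  simp

lemma addE_mem_support (B : (Fin q → ℕ) →₀ ℕ) (b : Fin q → ℕ) (j : Fin q) :
    (fun i => b i + eVec j i) ∈ (addT B b j).support := by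
  rw [Finsupp.mem_support_iff, addT_apply_addE]
  omega

lemma addE_sub_eVec (b : Fin q → ℕ) (j : Fin q) :
    (fun i => (b i + eVec j i) - eVec j i) = b := by
  funext i
  simp

lemma removeOne_addT {B : (Fin q → ℕ) →₀ ℕ} (hB : B 0 = 0) {b : Fin q → ℕ}
    (hb : b = 0 ∨ b ∈ B.support) (j : Fin q) :
    removeOne (addT B b j) (fun i => b i + eVec j i) j = B := by
  rcases hb with hb | hb
  · subst hb
    rw [removeOne, if_pos (addE_zero j), addT_zero B hB]
    rw [addE_zero j, add_tsub_cancel_right]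
  · have hbne : b ≠ 0 := fun h => (Finsupp.mem_support_iff.mp hb) (h ▸ hB)
    rw [removeOne, if_neg]
    · rw [addT, add_tsub_cancel_right]
      have h2 : (fun i => (b i + eVec j i) - eVec j i) = b := addE_sub_eVec b j
      rw [h2]
      exact sub_add_single_cancel hb
    · intro h
      exact hbne ((addE_eq_eVec_iff b j).mp h)

lemma poch_succ (θ : ℝ) (N : ℕ) :
    (ascPochhammer ℝ (N+1)).eval θ = (ascPochhammer ℝ N).eval θ * (θ + N) := by
  rw [ascPochhammer_succ_right]
  simp [Polynomial.eval_mul]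

lemma prod_pow_addE (p : Fin q → ℝ) (c : Fin q → ℕ) (j : Fin q) :
    ∏ i, p i ^ (c i + eVec j i) = (∏ i, p i ^ c i) * p j := by
  have h : ∀ i ∈ Finset.univ, p i ^ (c i + eVec j i)
      = p i ^ c i * (if i = j then p j else 1) := by
    intro i _
    by_cases hij : i = j
    · subst hij; simp [eVec, pow_succ]
    · simp [eVec, hij]
  rw [Finset.prod_congr rfl h, Finset.prod_mul_distrib,
    Finset.prod_ite_eq' Finset.univ j (fun _ => p j)]
  simp

lemma pair_val (θ : ℝ) (hθ : 0 < θ) (p : Fin q → ℝ) (N : ℕ) (B : (Fin q → ℕ) →₀ ℕ)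
    (hB : B 0 = 0) (hN : ∑ i, colA B i = N) (b : Fin q → ℕ)
    (hb : b = 0 ∨ b ∈ B.support) (j : Fin q) :
    ((b j : ℝ) + 1) * ((B (fun i => b i + eVec j i) : ℝ) + 1) / (N + 1)
        * esf θ p (N + 1) (addT B b j)
      = p j * (if b = 0 then θ else (∑ i, b i) * (B b : ℝ)) / (θ + N) * esf θ p N B := by
  have hpoch : (0:ℝ) < (ascPochhammer ℝ N).eval θ := pochPos θ hθ N
  have hθN : (0:ℝ) < θ + N := by positivity
  have hN1 : (0:ℝ) < (N:ℝ) + 1 := by positivity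
  have hfacN : (0:ℝ) < (N ! : ℝ) := by exact_mod_cast Nat.factorial_pos N
  have hA0 : (addT B b j) 0 = 0 := addT_apply_zero hB b j
  have hcol : ∀ i, colA (addT B b j) i = colA B i + eVec j i := colA_addT hB hb j
  have hprodp : ∏ i, p i ^ colA (addT B b j) i = (∏ i, p i ^ colA B i) * p j := by
    rw [Finset.prod_congr rfl (fun i _ => by rw [hcol i])]
    exact prod_pow_addE p (colA B) j
  have hfact : ((N+1)! : ℝ) = ((N:ℝ)+1) * (N ! : ℝ) := by
    rw [Nat.factorial_succ]; push_cast; ring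
  rw [esf_eq θ p (N+1) _ hA0, esf_eq θ p N B hB, hprodp, hfact, poch_succ]
  rcases hb with hb | hb
  · subst hb
    rw [if_pos rfl]
    have h0j : ((0 : Fin q → ℕ) j : ℝ) = 0 := by norm_num
    have hBE : B (fun i => (0:Fin q → ℕ) i + eVec j i) = B (eVec j) :=
      congrArg B (addE_zero j)
    have hsize : asize (addT B 0 j) = asize B + 1 := asize_addT_zero hB j
    have hprod : prodF (addT B 0 j) = prodF B * (gcoef (eVec j) / ((B (eVec j) : ℝ) + 1)) := by
      rw [addT_zero B hB]
      exact prodF_add_single B (eVec j)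
    have hBe : (0:ℝ) < (B (eVec j) : ℝ) + 1 := by positivity
    rw [hsize, hprod, gcoef_eVec, hBE, h0j, pow_succ]
    field_simp [hpoch.ne', hθN.ne', hN1.ne', hfacN.ne', hBe.ne']
    ring
  · have hbne : b ≠ 0 := by
      intro h
      exact (Finsupp.mem_support_iff.mp hb) (by rw [h]; exact hB)
    rw [if_neg hbne]
    have hBb : 1 ≤ B b := Nat.one_le_iff_ne_zero.mpr (Finsupp.mem_support_iff.mp hb)
    have hsb : 1 ≤ ∑ i, b i := exists_pos_of_ne_zero hbne
    have hsize : asize (addT B b j) = asize B := asize_addT_mem hb j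
    have hgb : 0 < gcoef b := gcoef_pos b
    have hBbR : (0:ℝ) < (B b : ℝ) := by exact_mod_cast hBb
    have hden : (((B - Finsupp.single b 1) : (Fin q → ℕ) →₀ ℕ) b : ℝ) + 1 = (B b : ℝ) := by
      rw [Finsupp.tsub_apply, Finsupp.single_apply, if_pos rfl]
      norm_cast
      omega
    have hpB : prodF B = prodF (B - Finsupp.single b 1) * (gcoef b / (B b : ℝ)) := by
      conv_lhs => rw [← sub_add_single_cancel hb]
      rw [prodF_add_single, hden]
    have hpA : prodF (addT B b j)
        = prodF (B - Finsupp.single b 1)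
          * (gcoef (fun i => b i + eVec j i) / ((B (fun i => b i + eVec j i) : ℝ) + 1)) := by
      rw [addT, prodF_add_single]
      rw [sub_single_apply_ne (Ne.symm (addE_ne_self b j))]
    have hgadd := gcoef_add_eVec b j hsb
    have hBaddE : (0:ℝ) < (B (fun i => b i + eVec j i) : ℝ) + 1 := by positivity
    have hbj1 : (0:ℝ) < (b j : ℝ) + 1 := by positivity
    have hsbR : (0:ℝ) < (∑ i, b i : ℕ) := by exact_mod_cast hsb
    rw [hsize, hpA, hgadd, hpB]
    field_simp [hpoch.ne', hθN.ne', hN1.ne', hfacN.ne', hgb.ne', hBbR.ne',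
      hBaddE.ne', hbj1.ne']

lemma eVec_inj {j j' : Fin q} (h : eVec j = eVec j') : j = j' := by
  by_contra hne
  have := congrFun h j
  simp [eVec, hne] at this

lemma addT_apply (B : (Fin q → ℕ) →₀ ℕ) (b : Fin q → ℕ) (j : Fin q) (c : Fin q → ℕ) :
    (addT B b j) c = B c - (if b = c then 1 else 0)
      + (if (fun i => b i + eVec j i) = c then 1 else 0) := by
  rw [addT, Finsupp.add_apply, Finsupp.tsub_apply, Finsupp.single_apply,
    Finsupp.single_apply]

lemma addT_inj {B : (Fin q → ℕ) →₀ ℕ} (hB : B 0 = 0) {b b' : Fin q → ℕ} {j j' : Fin q}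
    (hb : b = 0 ∨ b ∈ B.support) (hb' : b' = 0 ∨ b' ∈ B.support)
    (h : addT B b j = addT B b' j') : b = b' ∧ j = j' := by
  have key : ∀ (c c' : Fin q → ℕ) (i i' : Fin q), c ∈ B.support → (c' = 0 ∨ c' ∈ B.support) →
      addT B c i = addT B c' i' → c' = c := by
    intro c c' i i' hc hc' heq
    by_contra hcc
    have hv := DFunLike.congr_fun heq c
    rw [addT_apply, addT_apply, if_pos rfl, if_neg hcc,
      if_neg (addE_ne_self c i)] at hv
    have hBc : 1 ≤ B c := Nat.one_le_iff_ne_zero.mpr (Finsupp.mem_support_iff.mp hc)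
    have ht : (if (fun i0 => c' i0 + eVec i' i0) = c then 1 else 0) ≤ 1 := by
      split_ifs <;> omega
    omega
  rcases hb with hb | hb
  · rcases hb' with hb' | hb'
    · subst hb; subst hb'
      rw [addT_zero B hB, addT_zero B hB] at h
      have h2 := add_left_cancel h
      have h3 : eVec j = eVec (q := q) j' :=
        Finsupp.single_left_injective (by norm_num) h2
      exact ⟨rfl, eVec_inj h3⟩
    · exfalso
      subst hb
      have hh : (0 : Fin q → ℕ) = b' := key b' 0 j' j hb' (Or.inl rfl) h.symm
      exact (Finsupp.mem_support_iff.mp hb') (by rw [← hh]; exact hB)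
  · rcases hb' with hb' | hb'
    · exfalso
      subst hb'
      have hh : (0 : Fin q → ℕ) = b := key b 0 j j' hb (Or.inl rfl) h
      exact (Finsupp.mem_support_iff.mp hb) (by rw [← hh]; exact hB)
    · have hbb : b' = b := key b b' j j' hb (Or.inr hb') h
      subst hbb
      refine ⟨rfl, ?_⟩
      rw [addT, addT] at h
      have h2 := add_left_cancel h
      have h3 := Finsupp.single_left_injective (M := ℕ) (by norm_num) h2
      by_contra hne
      have h4 := congrFun h3 j
      simp [eVec, hne] at h4

lemma recover {A B : (Fin q → ℕ) →₀ ℕ} (hA : A 0 = 0) {a : Fin q → ℕ} {j : Fin q}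
    (ha : a ∈ A.support) (haj : 1 ≤ a j) (hrem : removeOne A a j = B) :
    B 0 = 0 ∧ ∃ b, (b = 0 ∨ b ∈ B.support) ∧ a = (fun i => b i + eVec j i)
      ∧ A = addT B b j := by
  by_cases hev : a = eVec j
  · rw [removeOne, if_pos hev] at hrem
    have hB0 : B 0 = 0 := by
      rw [← hrem, Finsupp.tsub_apply, hA]
      simp
    have hAB : B + Finsupp.single a 1 = A := by
      rw [← hrem]
      exact tsub_add_cancel_of_le (single_le_of_mem ha)
    refine ⟨hB0, 0, Or.inl rfl, ?_, ?_⟩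
    · rw [hev]; exact (addE_zero j).symm
    · rw [addT_zero B hB0, ← hev, hAB]
  · rw [removeOne, if_neg hev] at hrem
    set b : Fin q → ℕ := fun i => a i - eVec j i with hbdef
    have hbne : b ≠ 0 := by
      intro h0
      apply hev
      funext i
      have hi := congrFun h0 i
      simp only [hbdef, Pi.zero_apply] at hi
      by_cases hij : i = j
      · subst hij
        simp only [eVec] at hi ⊢
        simp at hi ⊢
        omega
      · simp [eVec, hij] at hi ⊢
        omega
    have hB0 : B 0 = 0 := by
      rw [← hrem, Finsupp.add_apply, Finsupp.tsub_apply, hA]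
      simp [Finsupp.single_apply, hbne]
    have haE : a = fun i => b i + eVec j i := by
      funext i
      simp only [hbdef]
      by_cases hij : i = j
      · subst hij
        simp only [eVec]
        simp
        omega
      · simp [eVec, hij]
    have hmem : b ∈ B.support := by
      rw [Finsupp.mem_support_iff, ← hrem, Finsupp.add_apply, Finsupp.single_apply,
        if_pos rfl]
      omega
    refine ⟨hB0, b, Or.inr hmem, haE, ?_⟩
    have h1 : B - Finsupp.single b 1 = A - Finsupp.single a 1 := by
      rw [← hrem, add_tsub_cancel_right]
    rw [addT, h1, ← haE]
    exact (sub_add_single_cancel ha).symm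

lemma oneStep_addT {B : (Fin q → ℕ) →₀ ℕ} (hB : B 0 = 0) {b : Fin q → ℕ}
    (hb : b = 0 ∨ b ∈ B.support) (j : Fin q) (n : ℕ) :
    oneStepKernel n (addT B b j) B
      = ((b j : ℝ) + 1) * ((B (fun i => b i + eVec j i) : ℝ) + 1) / n := by
  have hA0 : (addT B b j) 0 = 0 := addT_apply_zero hB b j
  have huniq : ∀ (a : Fin q → ℕ) (j' : Fin q), a ∈ (addT B b j).support → 1 ≤ a j' →
      removeOne (addT B b j) a j' = B → a = (fun i => b i + eVec j i) ∧ j' = j := by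
    intro a j' ha haj hrem
    obtain ⟨hB0, b₂, hb₂, haE, hAeq⟩ := recover hA0 ha haj hrem
    obtain ⟨hbb, hjj⟩ := addT_inj hB hb₂ hb hAeq.symm
    subst hjj
    rw [haE, hbb]
    exact ⟨rfl, rfl⟩
  rw [oneStepKernel]
  rw [Finset.sum_eq_single_of_mem (fun i => b i + eVec j i) (addE_mem_support B b j)]
  · rw [Fintype.sum_eq_single j]
    · have hcond : 1 ≤ (fun i => b i + eVec j i) j
          ∧ removeOne (addT B b j) (fun i => b i + eVec j i) j = B := by
        constructor
        · simp [eVec]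
        · exact removeOne_addT hB hb j
      rw [if_pos hcond, addT_apply_addE]
      have : (fun i => b i + eVec j i) j = b j + 1 := by simp [eVec]
      rw [this]
      push_cast
      ring
    · intro j' hj'
      rw [if_neg]
      rintro ⟨h1, h2⟩
      exact hj' (huniq _ _ (addE_mem_support B b j) h1 h2).2
  · intro a ha hane
    apply Finset.sum_eq_zero
    intro j' _
    rw [if_neg]
    rintro ⟨h1, h2⟩
    exact hane (huniq a j' ha h1 h2).1

lemma part1 (θ : ℝ) (hθ : 0 < θ) (p : Fin q → ℝ) (hp1 : ∑ j, p j = 1)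
    (n : ℕ) (hn : 2 ≤ n) (B : (Fin q → ℕ) →₀ ℕ) (hB : B 0 = 0)
    (hcol : (∑ i, colA B i) = n - 1) :
    ∑ᶠ A ∈ {A : (Fin q → ℕ) →₀ ℕ | A 0 = 0 ∧ (∑ i, colA A i) = n},
      oneStepKernel n A B * esf θ p n A = esf θ p (n - 1) B := by
  obtain ⟨N, rfl⟩ : ∃ N, n = N + 1 := ⟨n - 1, by omega⟩
  simp only [Nat.add_sub_cancel] at hcol ⊢
  have hθN : (0:ℝ) < θ + N := by positivity
  set f : ((Fin q → ℕ) →₀ ℕ) → ℝ :=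
    fun A => oneStepKernel (N+1) A B * esf θ p (N+1) A with hf
  set P : Finset ((Fin q → ℕ) × Fin q) := (insert 0 B.support) ×ˢ Finset.univ with hP
  set t := P.image (fun x => addT B x.1 x.2) with ht
  have hmemP : ∀ x : (Fin q → ℕ) × Fin q, x ∈ P ↔ (x.1 = 0 ∨ x.1 ∈ B.support) := by
    intro x
    simp [hP, Finset.mem_product, Finset.mem_insert]
  have hcolT : ∀ b : Fin q → ℕ, (b = 0 ∨ b ∈ B.support) → ∀ j,
      (∑ i, colA (addT B b j) i) = N + 1 := by
    intro b hb j
    rw [Finset.sum_congr rfl (fun i _ => colA_addT hB hb j i),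
      Finset.sum_add_distrib, hcol, sum_eVec]
  have hstep1 : ∑ᶠ A ∈ {A : (Fin q → ℕ) →₀ ℕ | A 0 = 0 ∧ (∑ i, colA A i) = N + 1},
      f A = ∑ A ∈ t, f A := by
    apply finsum_mem_eq_sum_of_inter_support_eq
    ext A
    simp only [Set.mem_inter_iff, Set.mem_setOf_eq, Function.mem_support,
      Finset.mem_coe]
    constructor
    · rintro ⟨⟨hA0, hAcol⟩, hfA⟩
      refine ⟨?_, hfA⟩
      have h1 : oneStepKernel (N+1) A B ≠ 0 := by
        intro h0
        exact hfA (by rw [hf]; simp [h0])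
      rw [oneStepKernel] at h1
      obtain ⟨a, ha, h2⟩ := Finset.exists_ne_zero_of_sum_ne_zero h1
      obtain ⟨j, _, h3⟩ := Finset.exists_ne_zero_of_sum_ne_zero h2
      have hcond : 1 ≤ a j ∧ removeOne A a j = B := by
        by_contra hc
        rw [if_neg hc] at h3
        exact h3 rfl
      obtain ⟨hB0, b, hb, haE, hAeq⟩ := recover hA0 ha hcond.1 hcond.2
      rw [ht]
      exact Finset.mem_image.mpr ⟨(b, j), (hmemP (b, j)).mpr hb, hAeq.symm⟩
    · rintro ⟨hAt, hfA⟩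
      refine ⟨⟨?_, ?_⟩, hfA⟩ <;>
      · rw [ht] at hAt
        obtain ⟨x, hx, rfl⟩ := Finset.mem_image.mp hAt
        first
        | exact addT_apply_zero hB x.1 x.2
        | exact hcolT x.1 ((hmemP x).mp hx) x.2
  have hstep2 : ∑ A ∈ t, f A = ∑ x ∈ P, f (addT B x.1 x.2) := by
    rw [ht]
    apply Finset.sum_image
    intro x hx y hy hxy
    obtain ⟨h1, h2⟩ := addT_inj hB ((hmemP x).mp hx) ((hmemP y).mp hy) hxy
    exact Prod.ext h1 h2
  have hstep3 : ∀ x ∈ P, f (addT B x.1 x.2)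
      = p x.2 * (if x.1 = 0 then θ else (∑ i, x.1 i) * (B x.1 : ℝ)) / (θ + N)
        * esf θ p N B := by
    intro x hx
    obtain ⟨b, j⟩ := x
    have hb := (hmemP (b, j)).mp hx
    rw [hf]
    simp only
    rw [oneStep_addT hB hb j (N+1)]
    have hc : ((N + 1 : ℕ) : ℝ) = (N : ℝ) + 1 := by push_cast; ring
    rw [hc]
    exact pair_val θ hθ p N B hB hcol b hb j
  rw [hstep1, hstep2, Finset.sum_congr rfl hstep3]
  have h0nots : (0 : Fin q → ℕ) ∉ B.support := by
    rw [Finsupp.mem_support_iff]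
    simp [hB]
  have hsumN : ∑ b ∈ B.support, ((∑ i, b i : ℕ) * (B b : ℝ)) = N := by
    have hnat : ∑ b ∈ B.support, ((∑ i, b i) * B b) = N := by
      rw [← hcol]
      calc ∑ b ∈ B.support, (∑ i, b i) * B b
          = ∑ b ∈ B.support, ∑ i, B b * b i := by
            refine Finset.sum_congr rfl fun b _ => ?_
            rw [Finset.sum_mul]
            exact Finset.sum_congr rfl fun i _ => mul_comm _ _
        _ = ∑ i, ∑ b ∈ B.support, B b * b i := Finset.sum_comm
        _ = ∑ i, colA B i := rfl
    exact_mod_cast congrArg (Nat.cast : ℕ → ℝ) hnat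
  rw [hP, Finset.sum_product]
  have hinner : ∀ b ∈ insert (0 : Fin q → ℕ) B.support,
      (∑ j, p j * (if b = 0 then θ else ((∑ i, b i : ℕ) : ℝ) * (B b : ℝ)) / (θ + N)
        * esf θ p N B)
      = (if b = 0 then θ else ((∑ i, b i : ℕ) : ℝ) * (B b : ℝ)) / (θ + N)
        * esf θ p N B := by
    intro b _
    have hterm : ∀ j, p j * (if b = 0 then θ else ((∑ i, b i : ℕ) : ℝ) * (B b : ℝ)) / (θ + N)
        * esf θ p N B
        = p j * ((if b = 0 then θ else ((∑ i, b i : ℕ) : ℝ) * (B b : ℝ)) / (θ + N)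
          * esf θ p N B) := fun j => by ring
    rw [Finset.sum_congr rfl (fun j _ => hterm j), ← Finset.sum_mul, hp1, one_mul]
  rw [Finset.sum_congr rfl hinner, Finset.sum_insert h0nots, if_pos rfl]
  have hrest : ∑ b ∈ B.support,
      (if b = 0 then θ else ((∑ i, b i : ℕ) : ℝ) * (B b : ℝ)) / (θ + N) * esf θ p N B
      = (N : ℝ) / (θ + N) * esf θ p N B := by
    have h1 : ∀ b ∈ B.support,
        (if b = 0 then θ else ((∑ i, b i : ℕ) : ℝ) * (B b : ℝ)) / (θ + N) * esf θ p N B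
        = ((∑ i, b i : ℕ) : ℝ) * (B b : ℝ) * ((θ + N)⁻¹ * esf θ p N B) := by
      intro b hb
      have hbne : ¬ b = 0 := by
        intro h
        rw [h] at hb
        exact h0nots hb
      rw [if_neg hbne]
      ring
    rw [Finset.sum_congr rfl h1, ← Finset.sum_mul, hsumN]
    ring
  rw [hrest]
  field_simp

lemma S_finite (n : ℕ) :
    {A : (Fin q → ℕ) →₀ ℕ | A 0 = 0 ∧ (∑ i, colA A i) = n}.Finite := by
  classical
  apply Set.Finite.of_finite_image (f := Finsupp.graph)
  · apply Set.Finite.subset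
      (Finset.finite_toSet (((Fintype.piFinset fun _ : Fin q => Finset.range (n+1))
        ×ˢ Finset.range (n+1)).powerset))
    rintro g ⟨A, ⟨hA0, hcol⟩, rfl⟩
    rw [Finset.mem_coe, Finset.mem_powerset]
    intro c hc
    obtain ⟨hval, hne⟩ := Finsupp.mem_graph_iff.mp hc
    have hmem : c.1 ∈ A.support := Finsupp.mem_support_iff.mpr (hval ▸ hne)
    have hane : c.1 ≠ 0 := by
      intro h
      rw [h, hA0] at hval
      exact hne hval.symm
    have hb1 : ∀ i, A c.1 * c.1 i ≤ n := by
      intro i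
      calc A c.1 * c.1 i ≤ ∑ a ∈ A.support, A a * a i :=
            Finset.single_le_sum (f := fun a => A a * a i) (fun _ _ => Nat.zero_le _) hmem
        _ = colA A i := rfl
        _ ≤ ∑ i, colA A i :=
            Finset.single_le_sum (fun _ _ => Nat.zero_le _) (Finset.mem_univ i)
        _ = n := hcol
    have hA1 : 1 ≤ A c.1 := Nat.one_le_iff_ne_zero.mpr (Finsupp.mem_support_iff.mp hmem)
    obtain ⟨i0, hi0⟩ := Function.ne_iff.mp hane
    have hi0' : 1 ≤ c.1 i0 := Nat.one_le_iff_ne_zero.mpr hi0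
    rw [Finset.mem_product]
    constructor
    · rw [Fintype.mem_piFinset]
      intro i
      rw [Finset.mem_range]
      have := hb1 i
      have h2 : c.1 i ≤ A c.1 * c.1 i := Nat.le_mul_of_pos_left _ (by omega)
      omega
    · rw [Finset.mem_range]
      have := hb1 i0
      have h2 : A c.1 ≤ A c.1 * c.1 i0 := Nat.le_mul_of_pos_right _ (by omega)
      have h3 : c.2 = A c.1 := hval.symm
      omega
  · intro x _ y _ hxy
    exact Finsupp.graph_injective _ _ hxy

lemma part2 (θ : ℝ) (hθ : 0 < θ) (p : Fin q → ℝ) (hp1 : ∑ j, p j = 1) :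
    ∀ k m : ℕ, 1 ≤ m → ∀ B : (Fin q → ℕ) →₀ ℕ, B 0 = 0 → (∑ i, colA B i) = m →
      ∑ᶠ A ∈ {A : (Fin q → ℕ) →₀ ℕ | A 0 = 0 ∧ (∑ i, colA A i) = m + k},
        iterKernel k (m + k) A B * esf θ p (m + k) A = esf θ p m B := by
  intro k
  induction k with
  | zero =>
    intro m hm B hB hcol
    simp only [Nat.add_zero]
    have hset : {A : (Fin q → ℕ) →₀ ℕ | A 0 = 0 ∧ (∑ i, colA A i) = m}
        ∩ Function.support (fun A => iterKernel 0 m A B * esf θ p m A)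
        = ↑({B} : Finset ((Fin q → ℕ) →₀ ℕ))
          ∩ Function.support (fun A => iterKernel 0 m A B * esf θ p m A) := by
      ext A
      simp only [Set.mem_inter_iff, Set.mem_setOf_eq, Function.mem_support,
        Finset.coe_singleton, Set.mem_singleton_iff]
      constructor
      · rintro ⟨_, hfA⟩
        refine ⟨?_, hfA⟩
        by_contra hAB
        exact hfA (by rw [iterKernel, if_neg hAB, zero_mul])
      · rintro ⟨hAB, hfA⟩
        subst hAB
        exact ⟨⟨hB, hcol⟩, hfA⟩
    rw [finsum_mem_eq_sum_of_inter_support_eq _ hset, Finset.sum_singleton,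
      iterKernel, if_pos rfl, one_mul]
  | succ k ih =>
    intro m hm B hB hcol
    have hn : m + (k + 1) = m + k + 1 := by omega
    rw [hn]
    have hfin := S_finite (q := q) (m + k + 1)
    have hfin' := S_finite (q := q) (m + k)
    rw [finsum_mem_eq_finite_toFinset_sum _ hfin]
    have hker : ∀ A ∈ hfin.toFinset, iterKernel (k+1) (m+k+1) A B
        = ∑ C ∈ hfin'.toFinset, oneStepKernel (m+k+1) A C * iterKernel k (m+k) C B := by
      intro A hA
      obtain ⟨hA0, hAcol⟩ := (Set.Finite.mem_toFinset hfin).mp hA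
      rw [iterKernel]
      have hd : m + k + 1 - 1 = m + k := by omega
      rw [hd]
      apply finsum_eq_finset_sum_of_support_subset
      intro C hC
      rw [Function.mem_support] at hC
      have h1 : oneStepKernel (m+k+1) A C ≠ 0 := by
        intro h0
        exact hC (by rw [h0, zero_mul])
      rw [oneStepKernel] at h1
      obtain ⟨a, ha, h2⟩ := Finset.exists_ne_zero_of_sum_ne_zero h1
      obtain ⟨j, _, h3⟩ := Finset.exists_ne_zero_of_sum_ne_zero h2
      have hcond : 1 ≤ a j ∧ removeOne A a j = C := by
        by_contra hc
        rw [if_neg hc] at h3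
        exact h3 rfl
      obtain ⟨hC0, b, hb, haE, hAeq⟩ := recover hA0 ha hcond.1 hcond.2
      rw [Finset.mem_coe, Set.Finite.mem_toFinset]
      refine ⟨hC0, ?_⟩
      have hAcol2 : ∑ i, colA A i = (∑ i, colA C i) + 1 := by
        rw [hAeq]
        rw [Finset.sum_congr rfl (fun i _ => colA_addT hC0 hb j i),
          Finset.sum_add_distrib, sum_eVec]
      omega
    rw [Finset.sum_congr rfl (fun A hA => by rw [hker A hA])]
    have hdist : ∀ A ∈ hfin.toFinset,
        (∑ C ∈ hfin'.toFinset, oneStepKernel (m+k+1) A C * iterKernel k (m+k) C B)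
          * esf θ p (m+k+1) A
        = ∑ C ∈ hfin'.toFinset, iterKernel k (m+k) C B
            * (oneStepKernel (m+k+1) A C * esf θ p (m+k+1) A) := by
      intro A _
      rw [Finset.sum_mul]
      exact Finset.sum_congr rfl fun C _ => by ring
    rw [Finset.sum_congr rfl hdist, Finset.sum_comm]
    have hinner : ∀ C ∈ hfin'.toFinset,
        ∑ A ∈ hfin.toFinset, iterKernel k (m+k) C B
          * (oneStepKernel (m+k+1) A C * esf θ p (m+k+1) A)
        = iterKernel k (m+k) C B * esf θ p (m+k) C := by
      intro C hC
      obtain ⟨hC0, hCcol⟩ := (Set.Finite.mem_toFinset hfin').mp hC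
      rw [← Finset.mul_sum]
      congr 1
      have hp1' := part1 θ hθ p hp1 (m+k+1) (by omega) C hC0 (by omega)
      rw [finsum_mem_eq_finite_toFinset_sum _ hfin] at hp1'
      have hd : m + k + 1 - 1 = m + k := by omega
      rw [hd] at hp1'
      exact hp1'
    rw [Finset.sum_congr rfl hinner, ← finsum_mem_eq_finite_toFinset_sum _ hfin']
    exact ih m hm B hB hcol

end helpers

/-- **Consistency of the polychromatic ESF.** For every `n ≥ 2` and `B ∈ 𝒜_{n-1}`,
`∑_{A ∈ 𝒜_n} S_{n,n-1}(A,B) Esf_{θ,p}^n(A) = Esf_{θ,p}^{n-1}(B)`; consequently the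
family `(Esf_{θ,p}^n)_{n≥1}` is consistent with respect to the system of kernels
generated by the one-step kernels under composition. -/
theorem esf_consistent (q : ℕ) (hq : 1 ≤ q) (θ : ℝ) (hθ : 0 < θ)
    (p : Fin q → ℝ) (hp : ∀ j, 0 ≤ p j) (hp1 : ∑ j, p j = 1) :
    (∀ n, 2 ≤ n → ∀ B : (Fin q → ℕ) →₀ ℕ, B 0 = 0 → (∑ i, colA B i) = n - 1 →
      ∑ᶠ A ∈ {A : (Fin q → ℕ) →₀ ℕ | A 0 = 0 ∧ (∑ i, colA A i) = n},
        oneStepKernel n A B * esf θ p n A = esf θ p (n - 1) B) ∧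
    (∀ n m, 1 ≤ m → m ≤ n → ∀ B : (Fin q → ℕ) →₀ ℕ, B 0 = 0 → (∑ i, colA B i) = m →
      ∑ᶠ A ∈ {A : (Fin q → ℕ) →₀ ℕ | A 0 = 0 ∧ (∑ i, colA A i) = n},
        iterKernel (n - m) n A B * esf θ p n A = esf θ p m B) := by
  constructor
  · intro n hn B hB hcol
    exact part1 θ hθ p hp1 n hn B hB hcol
  · intro n m hm hmn B hB hcol
    have h := part2 θ hθ p hp1 (n - m) m hm B hB hcol
    rw [Nat.add_sub_cancel' hmn] at h
    exact h
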